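/- Let α and β be measurable spaces, let μ and ν be finite measures on α, and let ε ≥ 0 and δ ≥ 0 be such that μ(S) ≤ exp(ε)·ν(S) + δ for every measurable set S ⊆ α. Let κ be a Markov kernel from α to β. Then the pushed-forward measures satisfy (μ.bind κ)(B) ≤ exp(ε)·(ν.bind κ)(B) + δ for every measurable set B ⊆ β. -/

import Mathlib

open MeasureTheory ProbabilityTheory Set

/-- **Post-processing preserves (ε,δ)-differential privacy**: if finite measures `μ, ν`
satisfy `μ(S) ≤ e^ε ν(S) + δ` for every measurable `S`, and `κ` is a Markov kernel,
then the pushed-forward measures satisfy the same inequality. -/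
theorem dp_post_processing
    {α β : Type*} [MeasurableSpace α] [MeasurableSpace β]
    (μ ν : Measure α) [IsFiniteMeasure μ] [IsFiniteMeasure ν]
    (ε δ : ℝ) (hε : 0 ≤ ε) (hδ : 0 ≤ δ)
    (hdp : ∀ S : Set α, MeasurableSet S →
      μ S ≤ ENNReal.ofReal (Real.exp ε) * ν S + ENNReal.ofReal δ)
    (κ : Kernel α β) [IsMarkovKernel κ] :
    ∀ B : Set β, MeasurableSet B →
      (μ.bind κ) B ≤ ENNReal.ofReal (Real.exp ε) * (ν.bind κ) B + ENNReal.ofReal δ := by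
  intro B hB
  set f : α → ℝ := fun a => (κ a B).toReal with hf
  have hfm : Measurable f := (κ.measurable_coe hB).ennreal_toReal
  have hfnn : ∀ a, 0 ≤ f a := fun a => ENNReal.toReal_nonneg
  have hfle : ∀ a, f a ≤ 1 := fun a => by
    simpa [f] using ENNReal.toReal_le_of_le_ofReal one_pos.le (by simpa using prob_le_one (μ := κ a) (s := B))
  have hofReal : ∀ a, ENNReal.ofReal (f a) = κ a B := fun a =>
    ENNReal.ofReal_toReal (measure_ne_top _ _)
  have hbind : ∀ (m : Measure α), (m.bind κ) B = ∫⁻ a, ENNReal.ofReal (f a) ∂m := by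
    intro m
    rw [Measure.bind_apply hB κ.measurable.aemeasurable]
    exact lintegral_congr fun a => (hofReal a).symm
  have hmeas_set : ∀ t : ℝ, MeasurableSet {a : α | t < f a} :=
    fun t => measurableSet_lt measurable_const hfm
  have key : ∀ (m : Measure α), (m.bind κ) B = ∫⁻ t in Ioi (0:ℝ), m {a | t < f a} := by
    intro m
    rw [hbind m]
    exact lintegral_eq_lintegral_meas_lt m (Filter.Eventually.of_forall hfnn) hfm.aemeasurable
  rw [key μ, key ν]
  have hempty : ∀ t : ℝ, 1 ≤ t → {a : α | t < f a} = ∅ := by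
    intro t ht
    ext a; simp only [mem_setOf_eq, mem_empty_iff_false, iff_false, not_lt]
    exact (hfle a).trans ht
  have h1 : ∫⁻ t in Ioi (0:ℝ), μ {a | t < f a} = ∫⁻ t in Ioo (0:ℝ) 1, μ {a | t < f a} := by
    rw [← lintegral_indicator measurableSet_Ioo, ← lintegral_indicator measurableSet_Ioi]
    congr 1
    ext t
    by_cases ht0 : 0 < t
    · by_cases ht1 : t < 1
      · simp [indicator, ht0, ht1]
      · simp [indicator, ht0, ht1, hempty t (not_lt.mp ht1)]
    · simp [indicator, ht0]
  rw [h1]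
  calc ∫⁻ t in Ioo (0:ℝ) 1, μ {a | t < f a}
      ≤ ∫⁻ t in Ioo (0:ℝ) 1, (ENNReal.ofReal (Real.exp ε) * ν {a | t < f a} + ENNReal.ofReal δ) := by
        refine lintegral_mono fun t => ?_
        exact hdp _ (hmeas_set t)
    _ = ENNReal.ofReal (Real.exp ε) * (∫⁻ t in Ioo (0:ℝ) 1, ν {a | t < f a})
          + ENNReal.ofReal δ * volume (Ioo (0:ℝ) 1) := by
        rw [lintegral_add_right _ measurable_const, lintegral_const,
          lintegral_const_mul' _ _ ENNReal.ofReal_ne_top, Measure.restrict_apply_univ]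
    _ ≤ ENNReal.ofReal (Real.exp ε) * (∫⁻ t in Ioi (0:ℝ), ν {a | t < f a}) + ENNReal.ofReal δ := by
        rw [Real.volume_Ioo]
        simp only [sub_zero, ENNReal.ofReal_one, mul_one]
        exact add_le_add_left (mul_le_mul_right (lintegral_mono_set Ioo_subset_Ioi_self) _) _
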